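/- Let 0 < γ < 1 and let ν be a nonnegative finite Borel measure on [0,1] whose Fourier coefficients satisfy |ν̂(n)| = O(n^{−γ}) as ℕ ∋ n → ∞. Then ν is γ-upper Frostman regular. -/

import Mathlib

open MeasureTheory ProbabilityTheory Filter Topology
open scoped ENNReal NNReal

noncomputable section

namespace MCCM

/-- Left endpoint of the `b`-adic interval indexed by the word `u` of length `n`. -/
def adicLeft (b n : ℕ) (u : Fin n → Fin b) : ℝ :=
  ∑ k : Fin n, (u k : ℝ) / (b : ℝ) ^ ((k : ℕ) + 1)

/-- The `b`-adic interval `I_u` indexed by the word `u`. -/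
def adicI (b n : ℕ) (u : Fin n → Fin b) : Set ℝ :=
  Set.Ico (adicLeft b n u) (adicLeft b n u + 1 / (b : ℝ) ^ n)

/-- The prefix of length `j` of the word `u`, as a list. -/
def wordPrefix (b n : ℕ) (u : Fin n → Fin b) (j : ℕ) : List (Fin b) :=
  (List.ofFn u).take j

/-- The complex exponential `e^{-2πi t ζ}`. -/
def eker (ζ t : ℝ) : ℂ :=
  Complex.exp ((-(2 * Real.pi * t * ζ) : ℝ) * Complex.I)

/-- Fourier transform of a measure on `ℝ`. -/
def ft (μ : Measure ℝ) (ζ : ℝ) : ℂ := ∫ t, eker ζ t ∂μ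

/-- The Fourier dimension of a measure on `ℝ`. -/
def fourierDim (μ : Measure ℝ) : ℝ :=
  sSup {D : ℝ | D ∈ Set.Icc (0 : ℝ) 1 ∧
    ∃ c : ℝ, 0 < c ∧ ∀ ζ : ℝ, ‖ft μ ζ‖ ≤ c * (1 + |ζ|) ^ (-D / 2)}

variable {Ω : Type*} [MeasureSpace Ω]

/-- The product of the weights over the prefixes `u|_j`, `j = 0, …, n`. -/
def cascadeWeight (b : ℕ) (WF : List (Fin b) → Ω → ℝ) (n : ℕ) (u : Fin n → Fin b) (ω : Ω) : ℝ :=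
  ∏ j ∈ Finset.range (n + 1), WF (wordPrefix b n u j) ω

/-- The random cascade measure `μ_n`. -/
def cascadeMeasure (b : ℕ) (WF : List (Fin b) → Ω → ℝ) (n : ℕ) (ω : Ω) : Measure ℝ :=
  volume.withDensity fun t => ENNReal.ofReal
    (∑ u : Fin n → Fin b, cascadeWeight b WF n u ω * (adicI b n u).indicator (fun _ => (1 : ℝ)) t)

/-- `W` is a random cascade weight: nonnegative, mean one, non-constant. -/
structure IsWeight (b : ℕ) (W : Ω → ℝ) : Prop where
  two_le : 2 ≤ b
  meas : Measurable W
  nonneg : ∀ ω, 0 ≤ W ω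
  integrable : Integrable W
  mean_one : (∫ ω, W ω) = 1
  nonconst : ∀ c : ℝ, ¬ (∀ᵐ ω : Ω, W ω = c)

/-- `WF` is a family of i.i.d. copies of `W` indexed by the nonempty words, with `WF ∅ ≡ 1`. -/
structure IsCopies (b : ℕ) (W : Ω → ℝ) (WF : List (Fin b) → Ω → ℝ) : Prop where
  root : ∀ ω, WF [] ω = 1
  meas : ∀ u, Measurable (WF u)
  nonneg : ∀ u ω, 0 ≤ WF u ω
  ident : ∀ u : List (Fin b), u ≠ [] → Measure.map (WF u) ℙ = Measure.map W ℙ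
  indep : iIndepFun
    (fun u : {u : List (Fin b) // u ≠ []} => WF u.1) ℙ

/-- `μlim` is a random finite measure on `[0,1]` which is almost surely
the weak limit of the cascade measures `μ_n`. -/
structure IsCascadeLimit (b : ℕ) (WF : List (Fin b) → Ω → ℝ) (μlim : Ω → Measure ℝ) : Prop where
  finite : ∀ ω, IsFiniteMeasure (μlim ω)
  support : ∀ ω, μlim ω (Set.Icc (0 : ℝ) 1)ᶜ = 0
  weak : ∀ᵐ ω : Ω, ∀ f : ℝ → ℝ, Continuous f →
    Tendsto (fun n => ∫ t, f t ∂ (cascadeMeasure b WF n ω)) atTop (𝓝 (∫ t, f t ∂ (μlim ω)))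

/-- `𝔼[W²]`. -/
def eW2 (W : Ω → ℝ) : ℝ := ∫ ω, (W ω) ^ 2

/-- `𝔼[W⁽²⁾ log W⁽²⁾]` where `W⁽²⁾ = W²/𝔼[W²]`. -/
def sqLogMoment (W : Ω → ℝ) : ℝ :=
  ∫ ω, ((W ω) ^ 2 / eW2 W) * Real.log ((W ω) ^ 2 / eW2 W)

open Classical in
/-- The quantity `D_F(W, b)`. -/
def DF (b : ℕ) (W : Ω → ℝ) : ℝ :=
  if sqLogMoment W ≤ Real.log b then 1 - Real.log (eW2 W) / Real.log b
  else 1 - ⨅ t : Set.Icc (1/2 : ℝ) 1,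
    Real.log (∫ ω, (b : ℝ) ^ (1 - (t : ℝ)) * (W ω) ^ (2 * (t : ℝ))) / ((t : ℝ) * Real.log b)

/-- `log W` is non-lattice. -/
def NonLattice (W : Ω → ℝ) : Prop :=
  ¬ ∃ a d : ℝ, ∀ᵐ ω : Ω, 0 < W ω → ∃ k : ℤ, Real.log (W ω) = a + d * k

end MCCM

namespace MCCM

/-- A nonnegative Borel measure `ν` on `ℝ` is `γ`-upper Frostman regular:
`sup { ν(I)/|I|^γ : I a nondegenerate finite interval } < ∞`. -/
def UpperFrostman (γ : ℝ) (ν : Measure ℝ) : Prop :=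
  ∃ C : ℝ, ∀ x y : ℝ, x < y → (ν (Set.Icc x y)).toReal ≤ C * (y - x) ^ γ

/-! ### Auxiliary lemmas for Statement 18 -/

/-- `e^{iθ}` for real `θ`. -/
def ec (θ : ℝ) : ℂ := Complex.exp ((θ : ℂ) * Complex.I)

lemma norm_ec (θ : ℝ) : ‖ec θ‖ = 1 := by
  simp [ec, Complex.norm_exp_ofReal_mul_I]

lemma ec_mul (a b : ℝ) : ec a * ec b = ec (a + b) := by
  rw [ec, ec, ec, ← Complex.exp_add]
  push_cast
  ring_nf

lemma conj_ec (θ : ℝ) : (starRingEnd ℂ) (ec θ) = ec (-θ) := by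
  rw [ec, ec, ← Complex.exp_conj, map_mul, Complex.conj_ofReal, Complex.conj_I]
  congr 1
  push_cast
  ring

lemma ec_re (θ : ℝ) : (ec θ).re = Real.cos θ := Complex.exp_ofReal_mul_I_re θ

lemma continuous_ec : Continuous ec :=
  Complex.continuous_exp.comp (Complex.continuous_ofReal.mul continuous_const)

lemma eker_eq_ec (ζ t : ℝ) : eker ζ t = ec (-(2 * Real.pi * t * ζ)) := rfl

lemma integrable_bdd {f : ℝ → ℂ} (ν : Measure ℝ) [IsFiniteMeasure ν]
    (hf : Continuous f) (c : ℝ) (hb : ∀ t, ‖f t‖ ≤ c) : Integrable f ν :=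
  (integrable_const c).mono' hf.aestronglyMeasurable (Filter.Eventually.of_forall hb)

lemma ft_neg (ν : Measure ℝ) (ζ : ℝ) : ft ν (-ζ) = (starRingEnd ℂ) (ft ν ζ) := by
  rw [ft, ft, ← integral_conj]
  refine integral_congr_ae (Filter.Eventually.of_forall fun t => ?_)
  show eker (-ζ) t = (starRingEnd ℂ) (eker ζ t)
  rw [eker_eq_ec, eker_eq_ec, conj_ec]
  congr 1
  ring

lemma norm_ft_neg (ν : Measure ℝ) (ζ : ℝ) : ‖ft ν (-ζ)‖ = ‖ft ν ζ‖ := by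
  rw [ft_neg]; exact RCLike.norm_conj _

lemma ft_zero (ν : Measure ℝ) : ft ν 0 = ((ν Set.univ).toReal : ℂ) := by
  rw [ft]
  have h : ∀ t : ℝ, eker 0 t = 1 := by
    intro t
    rw [eker_eq_ec]
    norm_num [ec]
  simp only [h, integral_const]
  rw [Complex.real_smul, mul_one]
  rfl

lemma norm_ft_zero (ν : Measure ℝ) : ‖ft ν 0‖ = (ν Set.univ).toReal := by
  rw [ft_zero, Complex.norm_real, Real.norm_eq_abs, abs_of_nonneg ENNReal.toReal_nonneg]

/-- Bernoulli-telescoping bound on `∑ (j+1)^{-γ}`. -/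
lemma sum_rpow_le {γ : ℝ} (hγ0 : 0 < γ) (hγ1 : γ < 1) (N : ℕ) :
    ∑ j ∈ Finset.range N, ((j : ℝ) + 1) ^ (-γ) ≤ (N : ℝ) ^ (1 - γ) / (1 - γ) := by
  have hp0 : 0 < 1 - γ := by linarith
  induction N with
  | zero => simp [Real.zero_rpow (by linarith : (1:ℝ) - γ ≠ 0)]
  | succ N ih =>
    have key : ((N : ℝ)) ^ (1 - γ) + (1 - γ) * ((N : ℝ) + 1) ^ (-γ)
        ≤ ((N : ℝ) + 1) ^ (1 - γ) := by
      set x : ℝ := (N : ℝ) + 1 with hxdef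
      have hx1 : (1 : ℝ) ≤ x := by
        have : (0:ℝ) ≤ (N:ℝ) := Nat.cast_nonneg N
        linarith
      have hx0 : (0 : ℝ) < x := by linarith
      have hinv : 1 / x ≤ 1 := by
        rw [div_le_one hx0]; exact hx1
      have hinv0 : 0 < 1 / x := by positivity
      have hs : (-1 : ℝ) ≤ -(1 / x) := by linarith
      have hbern : (1 + -(1/x)) ^ (1 - γ) ≤ 1 + (1 - γ) * (-(1/x)) :=
        rpow_one_add_le_one_add_mul_self hs hp0.le (by linarith)
      have h1s : (0:ℝ) ≤ 1 + -(1/x) := by linarith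
      have hN : (N : ℝ) = x * (1 + -(1/x)) := by
        field_simp
        linarith [hxdef]
      have hNp : (N : ℝ) ^ (1 - γ) = x ^ (1 - γ) * (1 + -(1/x)) ^ (1 - γ) := by
        rw [hN, Real.mul_rpow hx0.le h1s]
      have hdiv : x ^ (1 - γ) / x = x ^ (-γ) := by
        rw [← Real.rpow_sub_one hx0.ne']
        norm_num
      have hmul : x ^ (1 - γ) * (1 + (1 - γ) * (-(1/x)))
          = x ^ (1 - γ) - (1 - γ) * (x ^ (1 - γ) / x) := by
        field_simp
        ring
      have h2 : (N : ℝ) ^ (1 - γ) ≤ x ^ (1 - γ) - (1 - γ) * x ^ (-γ) := by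
        rw [hNp]
        calc x ^ (1 - γ) * (1 + -(1/x)) ^ (1 - γ)
            ≤ x ^ (1 - γ) * (1 + (1 - γ) * (-(1/x))) :=
              mul_le_mul_of_nonneg_left hbern (Real.rpow_nonneg hx0.le _)
          _ = x ^ (1 - γ) - (1 - γ) * (x ^ (1 - γ) / x) := hmul
          _ = x ^ (1 - γ) - (1 - γ) * x ^ (-γ) := by rw [hdiv]
      linarith
    rw [Finset.sum_range_succ]
    push_cast
    rw [le_div_iff₀ hp0] at ih ⊢
    nlinarith [ih, key]

/-- The trigonometric sum `∑_{k<N} e^{2πik(t-m)}`. -/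
def trigS (N : ℕ) (m t : ℝ) : ℂ := ∑ k ∈ Finset.range N, ec (2 * Real.pi * k * (t - m))

lemma continuous_trigS (N : ℕ) (m : ℝ) : Continuous (trigS N m) := by
  refine continuous_finset_sum _ fun k _ => continuous_ec.comp ?_
  continuity

/-- Spectral upper bound for the integral of `‖trigS‖²`. -/
lemma specA (ν : Measure ℝ) [IsFiniteMeasure ν] (N : ℕ) (m : ℝ) :
    ∫ t, ‖trigS N m t‖ ^ 2 ∂ν ≤
      ∑ k ∈ Finset.range N, ∑ l ∈ Finset.range N, ‖ft ν ((l : ℝ) - (k : ℝ))‖ := by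
  have hpt : ∀ t : ℝ, ((‖trigS N m t‖ ^ 2 : ℝ) : ℂ)
      = ∑ k ∈ Finset.range N, ∑ l ∈ Finset.range N,
          ec (2 * Real.pi * ((k : ℝ) - (l : ℝ)) * (t - m)) := by
    intro t
    have h1 : ((‖trigS N m t‖ ^ 2 : ℝ) : ℂ) = trigS N m t * (starRingEnd ℂ) (trigS N m t) := by
      rw [Complex.mul_conj, Complex.normSq_eq_norm_sq]
    rw [h1, trigS, map_sum, Finset.sum_mul_sum]
    refine Finset.sum_congr rfl fun k _ => Finset.sum_congr rfl fun l _ => ?_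
    rw [conj_ec, ec_mul]
    congr 1
    ring
  have hint : ∀ a : ℝ, Integrable (fun t => ec (2 * Real.pi * a * (t - m))) ν := by
    intro a
    refine integrable_bdd ν (continuous_ec.comp (by continuity)) 1 fun t => le_of_eq (norm_ec _)
  have hI : ∫ t, ((‖trigS N m t‖ ^ 2 : ℝ) : ℂ) ∂ν
      = ∑ k ∈ Finset.range N, ∑ l ∈ Finset.range N,
          ∫ t, ec (2 * Real.pi * ((k : ℝ) - (l : ℝ)) * (t - m)) ∂ν := by
    simp_rw [hpt]
    rw [integral_finset_sum _ fun k _ => integrable_finset_sum _ fun l _ => hint _]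
    exact Finset.sum_congr rfl fun k _ => integral_finset_sum _ fun l _ => hint _
  have hval : ∀ a : ℝ, ‖∫ t, ec (2 * Real.pi * a * (t - m)) ∂ν‖ = ‖ft ν (-a)‖ := by
    intro a
    have h : ∀ t : ℝ, ec (2 * Real.pi * a * (t - m)) = ec (-(2 * Real.pi * a * m)) * eker (-a) t := by
      intro t
      rw [eker_eq_ec, ec_mul]
      congr 1
      ring
    simp_rw [h]
    rw [integral_const_mul, norm_mul, norm_ec, one_mul, ft]
  calc ∫ t, ‖trigS N m t‖ ^ 2 ∂ν
      = ‖((∫ t, ‖trigS N m t‖ ^ 2 ∂ν : ℝ) : ℂ)‖ := by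
        rw [Complex.norm_real, Real.norm_eq_abs,
          abs_of_nonneg (integral_nonneg fun t => sq_nonneg _)]
    _ = ‖∫ t, ((‖trigS N m t‖ ^ 2 : ℝ) : ℂ) ∂ν‖ := by
        congr 1
        exact integral_ofReal.symm
    _ = ‖∑ k ∈ Finset.range N, ∑ l ∈ Finset.range N,
          ∫ t, ec (2 * Real.pi * ((k : ℝ) - (l : ℝ)) * (t - m)) ∂ν‖ := by rw [hI]
    _ ≤ ∑ k ∈ Finset.range N, ∑ l ∈ Finset.range N,
          ‖∫ t, ec (2 * Real.pi * ((k : ℝ) - (l : ℝ)) * (t - m)) ∂ν‖ :=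
        (norm_sum_le _ _).trans (Finset.sum_le_sum fun k _ => norm_sum_le _ _)
    _ = ∑ k ∈ Finset.range N, ∑ l ∈ Finset.range N, ‖ft ν ((l : ℝ) - (k : ℝ))‖ := by
        refine Finset.sum_congr rfl fun k _ => Finset.sum_congr rfl fun l _ => ?_
        rw [hval]
        congr 1
        ring

/-- Bound on the double sum of Fourier coefficient norms. -/
lemma specB {γ C : ℝ} (hγ0 : 0 < γ) (hγ1 : γ < 1) (hC : 0 ≤ C)
    (ν : Measure ℝ) [IsFiniteMeasure ν]
    (hdecay : ∀ n : ℕ, 1 ≤ n → ‖ft ν (n : ℝ)‖ ≤ C * (n : ℝ) ^ (-γ)) (N : ℕ) :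
    ∑ k ∈ Finset.range N, ∑ l ∈ Finset.range N, ‖ft ν ((l : ℝ) - (k : ℝ))‖
      ≤ (N : ℝ) * ((ν Set.univ).toReal + 2 * C * ((N : ℝ) ^ (1 - γ) / (1 - γ))) := by
  set M : ℝ := (ν Set.univ).toReal with hM
  set Sb : ℝ := ∑ j ∈ Finset.range N, ((j : ℝ) + 1) ^ (-γ) with hSb
  have hSbnonneg : 0 ≤ Sb := Finset.sum_nonneg fun j _ => Real.rpow_nonneg (by positivity) _
  have hterm : ∀ j : ℕ, (0:ℝ) ≤ ((j : ℝ) + 1) ^ (-γ) := fun j => Real.rpow_nonneg (by positivity) _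
  have hnorm : ∀ k l : ℕ, k < l → ‖ft ν ((l : ℝ) - (k : ℝ))‖ ≤ C * (((l - k : ℕ) : ℝ)) ^ (-γ) := by
    intro k l hkl
    have hcast : ((l : ℝ) - (k : ℝ)) = ((l - k : ℕ) : ℝ) := by
      rw [Nat.cast_sub hkl.le]
    rw [hcast]
    exact hdecay _ (by omega)
  have hnorm' : ∀ k l : ℕ, l < k → ‖ft ν ((l : ℝ) - (k : ℝ))‖ ≤ C * (((k - l : ℕ) : ℝ)) ^ (-γ) := by
    intro k l hlk
    have h : ((l : ℝ) - (k : ℝ)) = -((k : ℝ) - (l : ℝ)) := by ring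
    rw [h, norm_ft_neg]
    have hcast : ((k : ℝ) - (l : ℝ)) = ((k - l : ℕ) : ℝ) := by
      rw [Nat.cast_sub hlk.le]
    rw [hcast]
    exact hdecay _ (by omega)
  have hinner : ∀ k ∈ Finset.range N,
      ∑ l ∈ Finset.range N, ‖ft ν ((l : ℝ) - (k : ℝ))‖ ≤ M + 2 * C * Sb := by
    intro k hk
    have hkN : k < N := Finset.mem_range.mp hk
    have hsplit : ∑ l ∈ Finset.range N, ‖ft ν ((l : ℝ) - (k : ℝ))‖
        = ∑ l ∈ Finset.range k, ‖ft ν ((l : ℝ) - (k : ℝ))‖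
          + ∑ l ∈ Finset.Ico k N, ‖ft ν ((l : ℝ) - (k : ℝ))‖ := by
      rw [Finset.range_eq_Ico, ← Finset.sum_Ico_consecutive _ (Nat.zero_le k) hkN.le]
      rw [← Finset.range_eq_Ico]
    have hlow : ∑ l ∈ Finset.range k, ‖ft ν ((l : ℝ) - (k : ℝ))‖ ≤ C * Sb := by
      calc ∑ l ∈ Finset.range k, ‖ft ν ((l : ℝ) - (k : ℝ))‖
          ≤ ∑ l ∈ Finset.range k, C * (((k - l : ℕ) : ℝ)) ^ (-γ) :=
            Finset.sum_le_sum fun l hl => hnorm' k l (Finset.mem_range.mp hl)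
        _ = ∑ j ∈ Finset.range k, C * (((j : ℝ) + 1)) ^ (-γ) := by
            rw [← Finset.sum_range_reflect]
            refine Finset.sum_congr rfl fun j hj => ?_
            have hj' : j < k := Finset.mem_range.mp hj
            have h5 : k - (k - 1 - j) = j + 1 := by omega
            rw [h5, Nat.cast_add, Nat.cast_one]
        _ = C * ∑ j ∈ Finset.range k, (((j : ℝ) + 1)) ^ (-γ) := by rw [Finset.mul_sum]
        _ ≤ C * Sb := by
            refine mul_le_mul_of_nonneg_left ?_ hC
            exact Finset.sum_le_sum_of_subset_of_nonneg
              (Finset.range_subset_range.mpr hkN.le) (fun j _ _ => hterm j)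
    have hhigh : ∑ l ∈ Finset.Ico k N, ‖ft ν ((l : ℝ) - (k : ℝ))‖ ≤ M + C * Sb := by
      rw [Finset.sum_eq_sum_Ico_succ_bot hkN]
      have hdiag : ‖ft ν ((k : ℝ) - (k : ℝ))‖ = M := by
        rw [sub_self, norm_ft_zero]
      have hrest : ∑ l ∈ Finset.Ico (k + 1) N, ‖ft ν ((l : ℝ) - (k : ℝ))‖ ≤ C * Sb := by
        calc ∑ l ∈ Finset.Ico (k + 1) N, ‖ft ν ((l : ℝ) - (k : ℝ))‖
            ≤ ∑ l ∈ Finset.Ico (k + 1) N, C * (((l - k : ℕ) : ℝ)) ^ (-γ) :=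
              Finset.sum_le_sum fun l hl => hnorm k l (by
                have := (Finset.mem_Ico.mp hl).1; omega)
          _ = ∑ j ∈ Finset.range (N - (k + 1)), C * (((j : ℝ) + 1)) ^ (-γ) := by
              rw [Finset.sum_Ico_eq_sum_range]
              refine Finset.sum_congr rfl fun j hj => ?_
              have h5 : k + 1 + j - k = j + 1 := by omega
              rw [h5, Nat.cast_add, Nat.cast_one]
          _ = C * ∑ j ∈ Finset.range (N - (k + 1)), (((j : ℝ) + 1)) ^ (-γ) := by
              rw [Finset.mul_sum]
          _ ≤ C * Sb := by
              refine mul_le_mul_of_nonneg_left ?_ hC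
              exact Finset.sum_le_sum_of_subset_of_nonneg
                (Finset.range_subset_range.mpr (by omega)) (fun j _ _ => hterm j)
      rw [hdiag]
      linarith
    rw [hsplit]
    linarith
  calc ∑ k ∈ Finset.range N, ∑ l ∈ Finset.range N, ‖ft ν ((l : ℝ) - (k : ℝ))‖
      ≤ ∑ _k ∈ Finset.range N, (M + 2 * C * Sb) := Finset.sum_le_sum hinner
    _ = (N : ℝ) * (M + 2 * C * Sb) := by
        rw [Finset.sum_const, Finset.card_range, nsmul_eq_mul]
    _ ≤ (N : ℝ) * (M + 2 * C * ((N : ℝ) ^ (1 - γ) / (1 - γ))) := by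
        refine mul_le_mul_of_nonneg_left ?_ (Nat.cast_nonneg N)
        have := sum_rpow_le hγ0 hγ1 N
        nlinarith

/-- Lower bound for the integral of `‖trigS‖²` over a short interval. -/
lemma specC (ν : Measure ℝ) [IsFiniteMeasure ν] (hsupp : ν (Set.Icc (0 : ℝ) 1)ᶜ = 0)
    (N : ℕ) (x y : ℝ) (hxy : x < y) (hsmall : Real.pi * N * (y - x) ≤ 1) :
    ((N : ℝ) / 2) ^ 2 * (ν (Set.Icc x y)).toReal ≤ ∫ t, ‖trigS N ((x + y) / 2) t‖ ^ 2 ∂ν := by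
  set m : ℝ := (x + y) / 2 with hm
  have hlow : ∀ t ∈ Set.Icc x y, ((N : ℝ) / 2) ^ 2 ≤ ‖trigS N m t‖ ^ 2 := by
    intro t ht
    obtain ⟨ht1, ht2⟩ := ht
    have htm : |t - m| ≤ (y - x) / 2 := by
      rw [abs_le, hm]
      constructor <;> linarith
    have hre : ∀ k ∈ Finset.range N, (1 : ℝ) / 2 ≤ (ec (2 * Real.pi * k * (t - m))).re := by
      intro k hk
      rw [ec_re]
      have hkN : (k : ℝ) ≤ N := by exact_mod_cast (Finset.mem_range.mp hk).le
      have hθ : |2 * Real.pi * k * (t - m)| ≤ 1 := by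
        rw [abs_mul]
        have h1 : |2 * Real.pi * (k : ℝ)| = 2 * Real.pi * k := abs_of_nonneg (by positivity)
        calc |2 * Real.pi * (k : ℝ)| * |t - m|
            ≤ (2 * Real.pi * k) * ((y - x) / 2) := by
              rw [h1]
              exact mul_le_mul_of_nonneg_left htm (by positivity)
          _ = Real.pi * (k : ℝ) * (y - x) := by ring
          _ ≤ Real.pi * (N : ℝ) * (y - x) := by
              have h2 := mul_le_mul_of_nonneg_right
                (mul_le_mul_of_nonneg_left hkN Real.pi_pos.le)
                (le_of_lt (sub_pos.mpr hxy))
              linarith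
          _ ≤ 1 := hsmall
      have hcos := Real.one_sub_sq_div_two_le_cos (x := 2 * Real.pi * k * (t - m))
      nlinarith [sq_abs (2 * Real.pi * (k : ℝ) * (t - m)),
        abs_nonneg (2 * Real.pi * (k : ℝ) * (t - m))]
    have hRe : (N : ℝ) / 2 ≤ (trigS N m t).re := by
      rw [trigS, Complex.re_sum]
      calc (N : ℝ) / 2 = ∑ _k ∈ Finset.range N, (1 : ℝ) / 2 := by
            rw [Finset.sum_const, Finset.card_range, nsmul_eq_mul]
            ring
        _ ≤ ∑ k ∈ Finset.range N, (ec (2 * Real.pi * k * (t - m))).re :=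
            Finset.sum_le_sum hre
    have h1 : (N : ℝ) / 2 ≤ ‖trigS N m t‖ :=
      hRe.trans (Complex.re_le_norm _)
    exact pow_le_pow_left₀ (by positivity) h1 2
  have hbound : ∀ t : ℝ, ‖trigS N m t‖ ≤ (N : ℝ) := by
    intro t
    calc ‖trigS N m t‖ ≤ ∑ k ∈ Finset.range N, ‖ec (2 * Real.pi * k * (t - m))‖ :=
          norm_sum_le _ _
      _ = ∑ _k ∈ Finset.range N, (1 : ℝ) :=
          Finset.sum_congr rfl fun k _ => norm_ec _
      _ = (N : ℝ) := by simp
  have hSint : Integrable (fun t => ‖trigS N m t‖ ^ 2) ν := by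
    refine (integrable_const ((N : ℝ) ^ 2)).mono'
      (((continuous_trigS N m).norm.pow 2).aestronglyMeasurable)
      (Filter.Eventually.of_forall fun t => ?_)
    rw [Real.norm_eq_abs, abs_of_nonneg (sq_nonneg _)]
    exact pow_le_pow_left₀ (norm_nonneg _) (hbound t) 2
  set A : Set ℝ := Set.Icc x y ∩ Set.Icc 0 1 with hA
  have hmeasA : MeasurableSet A := measurableSet_Icc.inter measurableSet_Icc
  have hνeq : ν (Set.Icc x y) = ν A := by
    have h1 : ν (Set.Icc x y ∩ Set.Icc 0 1) + ν (Set.Icc x y \ Set.Icc 0 1)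
        = ν (Set.Icc x y) := measure_inter_add_diff _ measurableSet_Icc
    have h2 : ν (Set.Icc x y \ Set.Icc 0 1) ≤ ν (Set.Icc (0:ℝ) 1)ᶜ :=
      measure_mono (Set.diff_subset_compl _ _)
    rw [hsupp] at h2
    have h3 : ν (Set.Icc x y \ Set.Icc 0 1) = 0 := le_antisymm h2 zero_le
    rw [hA, ← h1, h3, add_zero]
  calc ((N : ℝ) / 2) ^ 2 * (ν (Set.Icc x y)).toReal
      = ((N : ℝ) / 2) ^ 2 * (ν A).toReal := by rw [hνeq]
    _ ≤ ∫ t in A, ‖trigS N m t‖ ^ 2 ∂ν :=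
        by have := setIntegral_ge_of_const_le_real hmeasA (measure_ne_top ν A)
             (fun t ht => hlow t ht.1) hSint.integrableOn
           exact this
    _ ≤ ∫ t, ‖trigS N m t‖ ^ 2 ∂ν :=
        setIntegral_le_integral hSint (Filter.Eventually.of_forall fun t => sq_nonneg _)


set_option maxHeartbeats 1000000 in
/-- Let `0 < γ < 1` and let `ν` be a nonnegative finite Borel measure on
`[0,1]` with `|ν̂(n)| = O(n^{−γ})` as `ℕ ∋ n → ∞`.  Then `ν` is `γ`-upper Frostman regular. -/
theorem statement18 (γ : ℝ) (hγ0 : 0 < γ) (hγ1 : γ < 1)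
    (ν : Measure ℝ) [IsFiniteMeasure ν] (hsupp : ν (Set.Icc (0 : ℝ) 1)ᶜ = 0)
    (C : ℝ) (hdecay : ∀ n : ℕ, 1 ≤ n → ‖ft ν (n : ℝ)‖ ≤ C * (n : ℝ) ^ (-γ)) :
    UpperFrostman γ ν := by
  set M : ℝ := (ν Set.univ).toReal with hM
  have hM0 : 0 ≤ M := ENNReal.toReal_nonneg
  have hC : 0 ≤ C := by
    have h := hdecay 1 le_rfl
    have h2 : (0 : ℝ) ≤ C * ((1 : ℕ) : ℝ) ^ (-γ) := le_trans (norm_nonneg _) h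
    simpa [Real.one_rpow] using h2
  have hp0 : 0 < 1 - γ := by linarith
  have hK : 0 ≤ 64 * C / (1 - γ) := by positivity
  refine ⟨40 * M + 64 * C / (1 - γ), fun x y hxy => ?_⟩
  set δ : ℝ := y - x with hδ
  clear_value δ
  have hδ0 : 0 < δ := by rw [hδ]; linarith
  have hδγ0 : 0 ≤ δ ^ γ := Real.rpow_nonneg hδ0.le γ
  by_cases hbig : 1 / 8 ≤ δ
  · -- large intervals: trivial bound by total mass
    have h1 : (ν (Set.Icc x y)).toReal ≤ M :=
      ENNReal.toReal_mono (measure_ne_top ν _) (measure_mono (Set.subset_univ _))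
    have h2 : (1 : ℝ) / 8 ≤ δ ^ γ := by
      by_cases hδ1 : δ ≤ 1
      · have h3 := Real.rpow_le_rpow_of_exponent_ge hδ0 hδ1 hγ1.le
        rw [Real.rpow_one] at h3
        linarith
      · have h3 : (1 : ℝ) ^ γ ≤ δ ^ γ :=
          Real.rpow_le_rpow (by norm_num) (le_of_not_ge hδ1) hγ0.le
        rw [Real.one_rpow] at h3
        linarith
    have h3 : 8 * M * (1 / 8) ≤ 8 * M * (δ ^ γ) :=
      mul_le_mul_of_nonneg_left h2 (by positivity)
    linarith [mul_nonneg hM0 hδγ0, mul_nonneg hK hδγ0]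
  · push_neg at hbig
    have hδ1 : δ ≤ 1 := by linarith
    set N : ℕ := ⌊1 / (4 * δ)⌋₊ with hN
    have h4δ : (2 : ℝ) ≤ 1 / (4 * δ) := by
      rw [le_div_iff₀ (by linarith : (0 : ℝ) < 4 * δ)]
      linarith
    have hNfloor : (N : ℝ) ≤ 1 / (4 * δ) :=
      Nat.floor_le (le_of_lt (div_pos one_pos (by linarith)))
    have hN2 : 2 ≤ N := Nat.le_floor (by exact_mod_cast h4δ)
    have hNlt : 1 / (4 * δ) < (N : ℝ) + 1 := Nat.lt_floor_add_one _
    clear_value N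
    have hN0 : (0 : ℝ) < N := by
      have h : (0 : ℕ) < N := by omega
      exact_mod_cast h
    have ha : (1 : ℝ) ≤ 1 / (8 * δ) := by
      rw [le_div_iff₀ (by linarith : (0 : ℝ) < 8 * δ)]
      linarith
    have hAB : 1 / (8 * δ) = 1 / (4 * δ) / 2 := by
      rw [show (8 : ℝ) * δ = 4 * δ * 2 by ring, ← div_div]
    have hNlow : 1 / (8 * δ) ≤ (N : ℝ) := by
      rw [hAB] at ha ⊢
      linarith
    have hsmall : Real.pi * N * δ ≤ 1 := by
      have hπ : Real.pi ≤ 4 := Real.pi_le_four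
      have hcancel : 1 / (4 * δ) * (4 * δ) = 1 :=
        one_div_mul_cancel (by linarith : (4 : ℝ) * δ ≠ 0)
      have h2 := mul_le_mul_of_nonneg_right hNfloor hδ0.le
      have h1 : (N : ℝ) * δ ≤ 1 / 4 := by nlinarith [hcancel, h2]
      nlinarith [mul_nonneg hN0.le hδ0.le, mul_nonneg
        (by linarith : (0 : ℝ) ≤ 4 - Real.pi) (mul_nonneg hN0.le hδ0.le)]
    rw [hδ] at hsmall
    have hmain : ((N : ℝ) / 2) ^ 2 * (ν (Set.Icc x y)).toReal
        ≤ (N : ℝ) * (M + 2 * C * ((N : ℝ) ^ (1 - γ) / (1 - γ))) :=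
      le_trans (specC ν hsupp N x y hxy hsmall)
        (le_trans (specA ν N ((x + y) / 2)) (specB hγ0 hγ1 hC ν hdecay N))
    have hNγ : (N : ℝ) ^ (-γ) ≤ 8 * δ ^ γ := by
      have h1 : (N : ℝ) ^ (-γ) ≤ (1 / (8 * δ)) ^ (-γ) :=
        Real.rpow_le_rpow_of_nonpos (div_pos one_pos (by linarith)) hNlow (by linarith)
      have h2 : (1 / (8 * δ)) ^ (-γ) = (8 * δ) ^ γ := by
        rw [one_div, Real.inv_rpow (by linarith : (0 : ℝ) ≤ 8 * δ),
          ← Real.rpow_neg (by linarith : (0 : ℝ) ≤ 8 * δ), neg_neg]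
      have h3 : (8 * δ) ^ γ = 8 ^ γ * δ ^ γ := Real.mul_rpow (by norm_num) hδ0.le
      have h4 : (8 : ℝ) ^ γ ≤ 8 := by
        have h5 := Real.rpow_le_rpow_of_exponent_le (by norm_num : (1 : ℝ) ≤ 8) hγ1.le
        rw [Real.rpow_one] at h5
        exact h5
      calc (N : ℝ) ^ (-γ) ≤ (8 * δ) ^ γ := h1.trans_eq h2
        _ = 8 ^ γ * δ ^ γ := h3
        _ ≤ 8 * δ ^ γ := mul_le_mul_of_nonneg_right h4 hδγ0
    have hNδ : (1 : ℝ) ≤ 8 * δ ^ γ * (N : ℝ) := by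
      have h1 : δ ^ (1 : ℝ) ≤ δ ^ γ :=
        Real.rpow_le_rpow_of_exponent_ge hδ0 hδ1 hγ1.le
      rw [Real.rpow_one] at h1
      have hcancel : 1 / (8 * δ) * (8 * δ) = 1 :=
        one_div_mul_cancel (by linarith : (8 : ℝ) * δ ≠ 0)
      have h2 := mul_le_mul_of_nonneg_right hNlow (by linarith : (0 : ℝ) ≤ 8 * δ)
      have h3 : (1 : ℝ) ≤ 8 * δ * (N : ℝ) := by nlinarith [hcancel, h2]
      nlinarith [mul_le_mul_of_nonneg_left h1 (by positivity : (0 : ℝ) ≤ 8 * (N : ℝ))]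
    have hNγ2 : (N : ℝ) ^ (1 - γ) = (N : ℝ) * (N : ℝ) ^ (-γ) := by
      rw [show (1 : ℝ) - γ = 1 + -γ by ring, Real.rpow_add hN0, Real.rpow_one]
    have hfinal : (N : ℝ) * (M + 2 * C * ((N : ℝ) ^ (1 - γ) / (1 - γ)))
        ≤ ((40 * M + 64 * C / (1 - γ)) * δ ^ γ) * (((N : ℝ) / 2) ^ 2) := by
      rw [hNγ2]
      have t1 : (N : ℝ) * M ≤ 8 * M * δ ^ γ * (N : ℝ) ^ 2 := by
        linarith [mul_le_mul_of_nonneg_left hNδ (mul_nonneg hN0.le hM0)]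
      have t2 : (N : ℝ) * (2 * C * ((N : ℝ) * (N : ℝ) ^ (-γ) / (1 - γ)))
          ≤ 16 * C * δ ^ γ * (N : ℝ) ^ 2 / (1 - γ) := by
        have expand : (N : ℝ) * (2 * C * ((N : ℝ) * (N : ℝ) ^ (-γ) / (1 - γ)))
            = 2 * C * (N : ℝ) ^ 2 * (N : ℝ) ^ (-γ) / (1 - γ) := by ring
        have expand2 : 16 * C * δ ^ γ * (N : ℝ) ^ 2 / (1 - γ)
            = 2 * C * (N : ℝ) ^ 2 * (8 * δ ^ γ) / (1 - γ) := by ring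
        rw [expand, expand2]
        have hcoef : (0 : ℝ) ≤ 2 * C * (N : ℝ) ^ 2 / (1 - γ) :=
          div_nonneg (mul_nonneg (by linarith) (sq_nonneg _)) hp0.le
        calc 2 * C * (N : ℝ) ^ 2 * (N : ℝ) ^ (-γ) / (1 - γ)
            = 2 * C * (N : ℝ) ^ 2 / (1 - γ) * (N : ℝ) ^ (-γ) := by ring
          _ ≤ 2 * C * (N : ℝ) ^ 2 / (1 - γ) * (8 * δ ^ γ) :=
              mul_le_mul_of_nonneg_left hNγ hcoef
          _ = 2 * C * (N : ℝ) ^ 2 * (8 * δ ^ γ) / (1 - γ) := by ring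
      have expandL : (N : ℝ) * (M + 2 * C * ((N : ℝ) * (N : ℝ) ^ (-γ) / (1 - γ)))
          = (N : ℝ) * M + (N : ℝ) * (2 * C * ((N : ℝ) * (N : ℝ) ^ (-γ) / (1 - γ))) := by ring
      have expandR : ((40 * M + 64 * C / (1 - γ)) * δ ^ γ) * (((N : ℝ) / 2) ^ 2)
          = 10 * M * δ ^ γ * (N : ℝ) ^ 2 + 16 * C * δ ^ γ * (N : ℝ) ^ 2 / (1 - γ) := by ring
      rw [expandL, expandR]
      linarith [t1, t2, mul_nonneg (mul_nonneg hM0 hδγ0) (sq_nonneg (N : ℝ))]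
    have hsqpos : (0 : ℝ) < ((N : ℝ) / 2) ^ 2 := pow_pos (by linarith) 2
    have hPK : ((N : ℝ) / 2) ^ 2 * (ν (Set.Icc x y)).toReal
        ≤ ((N : ℝ) / 2) ^ 2 * ((40 * M + 64 * C / (1 - γ)) * δ ^ γ) :=
      (hmain.trans hfinal).trans_eq (mul_comm _ _)
    exact le_of_mul_le_mul_left hPK hsqpos

end MCCM
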